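/- Let R = ℤ[√−5] with θ = √−5. The monic polynomial t² − 3t + (2 − 8θ) ∈ R[t] has no SR-factorization: there do not exist monic polynomials f₀, f₁ ∈ R[t] with f₀f₁ = t² − 3t + (2 − 8θ) such that f₀(0) and f₁(1) are units of R. -/

import Mathlib

/-- An SR-factorization of a monic polynomial `f` is a factorization `f = f₀ * f₁` into monic
polynomials with `f₀(0)` and `f₁(1)` units. -/
def HasSRFactorization {R : Type*} [CommRing R] (f : Polynomial R) : Prop :=
  ∃ f₀ f₁ : Polynomial R, f₀.Monic ∧ f₁.Monic ∧ f = f₀ * f₁ ∧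
    IsUnit (f₀.eval 0) ∧ IsUnit (f₁.eval 1)

open Polynomial

lemma zsqrtd_unit_pm {u : Zsqrtd (-5)} (h : IsUnit u) : u = 1 ∨ u = -1 := by
  have hn : u.norm.natAbs = 1 := Zsqrtd.norm_eq_one_iff.mpr h
  have hnn : 0 ≤ u.norm := Zsqrtd.norm_nonneg (by norm_num) u
  have h1 : u.norm = 1 := by omega
  rw [Zsqrtd.norm_def] at h1
  have him : u.im = 0 := by nlinarith [sq_nonneg u.im, sq_nonneg u.re, sq_abs u.im]
  have hre : u.re = 1 ∨ u.re = -1 := by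
    rw [him] at h1
    have : u.re * u.re = 1 := by linarith
    exact Int.isUnit_iff.mp (IsUnit.of_mul_eq_one _ this)
  rcases hre with h | h <;> [left; right] <;> ext <;> simp [h, him]

/-- The monic polynomial `t² - 3t + (2 - 8√-5)` over `ℤ[√-5]` has no SR-factorization. -/
theorem no_SRFactorization_example :
    ¬ HasSRFactorization
        ((X : Polynomial (Zsqrtd (-5))) ^ 2 - 3 * X + C (2 - 8 * Zsqrtd.sqrtd)) := by
  rintro ⟨f₀, f₁, h₀, h₁, heq, hu₀, hu₁⟩
  set f : Polynomial (Zsqrtd (-5)) := X ^ 2 - 3 * X + C (2 - 8 * Zsqrtd.sqrtd) with hf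
  have hdf : f.natDegree = 2 := by rw [hf]; compute_degree!
  have hdeg : f₀.natDegree + f₁.natDegree = 2 := by
    rw [← h₀.natDegree_mul h₁, ← heq, hdf]
  have hθ : ((2 : Zsqrtd (-5)) - 8 * Zsqrtd.sqrtd).im = -8 := by
    simp [Zsqrtd.ext_iff]
  have hle : f₀.natDegree ≤ 2 := by omega
  interval_cases h : f₀.natDegree
  · -- f₀ = 1
    have : f₀ = 1 := h₀.natDegree_eq_zero.mp h
    rw [this, one_mul] at heq
    rw [← heq] at hu₁
    have : f.eval 1 = -8 * Zsqrtd.sqrtd := by rw [hf]; ring_nf; simp; ring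
    rw [this] at hu₁
    rcases zsqrtd_unit_pm hu₁ with h | h <;>
      simpa [Zsqrtd.ext_iff] using congrArg Zsqrtd.im h
  · -- deg 1 each
    have h1 : f₁.natDegree = 1 := by omega
    have e₀ := h₀.eq_X_add_C h
    have e₁ := h₁.eq_X_add_C h1
    set a := f₀.coeff 0
    set b := f₁.coeff 0
    have hab : a * b = 2 - 8 * Zsqrtd.sqrtd := by
      have := congrArg (eval 0) heq
      simp [e₀, e₁, f] at this
      linear_combination -this
    have hs : (1 + a) * (1 + b) = -8 * Zsqrtd.sqrtd := by
      have := congrArg (eval 1) heq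
      simp [e₀, e₁, f] at this
      linear_combination -this
    have ha : a = 1 ∨ a = -1 := by
      have : f₀.eval 0 = a := by simp [e₀]
      exact zsqrtd_unit_pm (this ▸ hu₀)
    rcases ha with h | h <;> rw [h] at hab hs
    · have hb : b = 2 - 8 * Zsqrtd.sqrtd := by linear_combination hab
      rw [hb] at hs
      simpa [Zsqrtd.ext_iff] using congrArg Zsqrtd.im hs
    · have hb : b = -(2 - 8 * Zsqrtd.sqrtd) := by linear_combination -hab
      rw [hb] at hs
      have : (0 : Zsqrtd (-5)) = -8 * Zsqrtd.sqrtd := by linear_combination hs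
      simpa [Zsqrtd.ext_iff] using congrArg Zsqrtd.im this
  · -- f₁ = 1
    have h1 : f₁.natDegree = 0 := by omega
    have : f₁ = 1 := h₁.natDegree_eq_zero.mp h1
    rw [this, mul_one] at heq
    rw [← heq] at hu₀
    have : f.eval 0 = 2 - 8 * Zsqrtd.sqrtd := by rw [hf]; simp
    rw [this] at hu₀
    rcases zsqrtd_unit_pm hu₀ with h | h <;>
      simpa [Zsqrtd.ext_iff] using congrArg Zsqrtd.im h
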